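/- Let $M \in \mathbb{C}^{n\times n}$ have $n$ distinct eigenvalues, and let $E$ satisfy $\|E\| \le \mathrm{gap}(M) / (8 n^2 \kappa_V(M)^3)$. Then $\mathrm{gap}(M+E) \ge \mathrm{gap}(M) - 2\kappa_V(M)\|E\|$. -/

import Mathlib

open Matrix

/-- The spectral (ℓ² operator) norm of a complex matrix. -/
noncomputable def specNorm {m : Type*} [Fintype m] [DecidableEq m] (A : Matrix m m ℂ) : ℝ :=
  ‖Matrix.toEuclideanCLM (𝕜 := ℂ) A‖

open Polynomial

namespace Stmt6Aux

variable {n : ℕ}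

lemma specNorm_nonneg (A : Matrix (Fin n) (Fin n) ℂ) : 0 ≤ specNorm A := norm_nonneg _

lemma specNorm_mul_le (A B : Matrix (Fin n) (Fin n) ℂ) :
    specNorm (A * B) ≤ specNorm A * specNorm B := by
  unfold specNorm
  rw [_root_.map_mul]
  exact norm_mul_le _ _

lemma specNorm_eq_zero {A : Matrix (Fin n) (Fin n) ℂ} (h : specNorm A = 0) : A = 0 := by
  unfold specNorm at h
  rw [norm_eq_zero] at h
  have := congrArg (Matrix.toEuclideanCLM (𝕜 := ℂ)).symm h
  simpa using this

lemma specNorm_diagonal_le {w : Fin n → ℂ} {s : ℝ} (hs : 0 ≤ s) (h : ∀ i, ‖w i‖ ≤ s) :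
    specNorm (diagonal w) ≤ s := by
  apply ContinuousLinearMap.opNorm_le_bound _ hs
  intro x
  have hx : ∀ i, (Matrix.toEuclideanCLM (𝕜 := ℂ) (diagonal w) x) i = w i * x i := by
    intro i
    have := congrFun (Matrix.ofLp_toEuclideanCLM (𝕜 := ℂ) (diagonal w) x) i
    simpa [Matrix.toLin'_apply, Matrix.mulVec_diagonal] using this
  rw [EuclideanSpace.norm_eq, EuclideanSpace.norm_eq]
  calc Real.sqrt (∑ i, ‖(Matrix.toEuclideanCLM (𝕜 := ℂ) (diagonal w) x) i‖ ^ 2)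
      ≤ Real.sqrt (s ^ 2 * ∑ i, ‖x i‖ ^ 2) := by
        apply Real.sqrt_le_sqrt
        rw [Finset.mul_sum]
        apply Finset.sum_le_sum
        intro i _
        rw [hx i, norm_mul, ← mul_pow, mul_pow s _]
        have h1 : ‖w i‖ * ‖x i‖ ≤ s * ‖x i‖ :=
          mul_le_mul_of_nonneg_right (h i) (norm_nonneg _)
        rw [← mul_pow]
        exact pow_le_pow_left₀ (by positivity) h1 2
    _ = s * Real.sqrt (∑ i, ‖x i‖ ^ 2) := by
        rw [Real.sqrt_mul (sq_nonneg s), Real.sqrt_sq hs]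

lemma specNorm_real_smul_le {t : ℝ} (ht : 0 ≤ t) (A : Matrix (Fin n) (Fin n) ℂ) :
    specNorm (t • A) ≤ t * specNorm A := by
  have h : (t • A) = diagonal (fun _ => (t : ℂ)) * A := by
    rw [← Matrix.smul_eq_diagonal_mul, ← algebraMap_smul ℂ t A]
    norm_num
  rw [h]
  calc specNorm (diagonal (fun _ => (t : ℂ)) * A)
      ≤ specNorm (diagonal (fun _ : Fin n => (t : ℂ))) * specNorm A := specNorm_mul_le _ _
    _ ≤ t * specNorm A := by
        apply mul_le_mul_of_nonneg_right _ (specNorm_nonneg A)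
        exact specNorm_diagonal_le ht (fun i => by simp [Complex.norm_real, abs_of_nonneg ht])




lemma eval_charpoly (A : Matrix (Fin n) (Fin n) ℂ) (z : ℂ) :
    A.charpoly.eval z = (scalar (Fin n) z - A).det := by
  exact Matrix.eval_charpoly A z

lemma mem_spectrum_iff_det {A : Matrix (Fin n) (Fin n) ℂ} {z : ℂ} :
    z ∈ spectrum ℂ A ↔ (scalar (Fin n) z - A).det = 0 := by
  rw [spectrum.mem_iff]
  rw [Matrix.isUnit_iff_isUnit_det]
  have h : algebraMap ℂ (Matrix (Fin n) (Fin n) ℂ) z = scalar (Fin n) z := rfl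
  rw [h, isUnit_iff_ne_zero, not_not]

lemma mem_spectrum_iff_root {A : Matrix (Fin n) (Fin n) ℂ} {z : ℂ} :
    z ∈ spectrum ℂ A ↔ z ∈ A.charpoly.roots := by
  rw [mem_spectrum_iff_det, Polynomial.mem_roots ((Matrix.charpoly_monic A).ne_zero),
    Polynomial.IsRoot.def, eval_charpoly]

lemma charpoly_eq_prod {V : Matrix (Fin n) (Fin n) ℂ} (hV : IsUnit V.det)
    (d : Fin n → ℂ) :
    (V * diagonal d * V⁻¹).charpoly = ∏ i, (X - C (d i)) := by
  apply Polynomial.funext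
  intro z
  rw [eval_charpoly]
  have key : scalar (Fin n) z - V * diagonal d * V⁻¹
      = V * (scalar (Fin n) z - diagonal d) * V⁻¹ := by
    rw [Matrix.mul_sub, Matrix.sub_mul]
    congr 1
    have hsm : scalar (Fin n) z = (z • (1 : Matrix (Fin n) (Fin n) ℂ)) := by
      rw [scalar_apply, Matrix.smul_eq_diagonal_mul, Matrix.mul_one]
    rw [hsm]
    calc z • (1 : Matrix (Fin n) (Fin n) ℂ) = z • (V * V⁻¹) := by
          rw [Matrix.mul_nonsing_inv V hV]
      _ = V * z • (1 : Matrix (Fin n) (Fin n) ℂ) * V⁻¹ := by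
          rw [mul_smul_comm z V 1, Matrix.mul_one, smul_mul_assoc]
  rw [key, Matrix.det_mul, Matrix.det_mul]
  have hdet : V.det * (scalar (Fin n) z - diagonal d).det * V⁻¹.det
      = (scalar (Fin n) z - diagonal d).det := by
    rw [mul_comm V.det _, mul_assoc, ← Matrix.det_mul, Matrix.mul_nonsing_inv V hV]
    simp
  rw [hdet]
  have hd : scalar (Fin n) z - diagonal d = diagonal (fun i => z - d i) := by
    rw [scalar_apply, diagonal_sub]
  rw [hd, Matrix.det_diagonal]
  simp [Polynomial.eval_prod]


lemma prod_X_sub_C_eq (g : Fin n → ℂ) :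
    ∏ i, (X - C (g i)) = (Multiset.map (fun a => X - C a) (Finset.univ.val.map g)).prod := by
  rw [Multiset.map_map]
  rfl

lemma roots_prod_fun (g : Fin n → ℂ) :
    (∏ i, (X - C (g i))).roots = Finset.univ.val.map g := by
  rw [prod_X_sub_C_eq, Polynomial.roots_multiset_prod_X_sub_C]

lemma mem_univ_val_map {g : Fin n → ℂ} {z : ℂ} :
    z ∈ Finset.univ.val.map g ↔ ∃ i, g i = z := by
  simp [List.mem_ofFn, Set.mem_range]

lemma bauer_fike {V : Matrix (Fin n) (Fin n) ℂ} (hV : IsUnit V.det) (d : Fin n → ℂ)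
    (F : Matrix (Fin n) (Fin n) ℂ) (hc : 0 < specNorm V * specNorm V⁻¹) {z : ℂ}
    (hz : z ∈ spectrum ℂ (V * diagonal d * V⁻¹ + F)) :
    ∃ i, dist z (d i) ≤ specNorm V * specNorm V⁻¹ * specNorm F := by
  rcases Nat.eq_zero_or_pos n with h0 | hn
  · exfalso
    rw [spectrum.mem_iff] at hz
    apply hz
    subst h0
    have h1 : (algebraMap ℂ (Matrix (Fin 0) (Fin 0) ℂ)) z - (V * diagonal d * V⁻¹ + F) = 1 :=
      Subsingleton.elim _ _
    rw [h1]
    exact isUnit_one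
  set c := specNorm V * specNorm V⁻¹ with hcdef
  set r := c * specNorm F with hrdef
  by_contra hcon
  push_neg at hcon
  rcases eq_or_lt_of_le (specNorm_nonneg F) with hF0 | hFpos
  · have hF : F = 0 := specNorm_eq_zero hF0.symm
    have hz' : z ∈ spectrum ℂ (V * diagonal d * V⁻¹) := by rwa [hF, add_zero] at hz
    rw [mem_spectrum_iff_root, charpoly_eq_prod hV d, roots_prod_fun, mem_univ_val_map] at hz'
    obtain ⟨i, hi⟩ := hz'
    have h2 := hcon i
    rw [← hi, dist_self, hrdef, ← hF0, mul_zero] at h2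
    exact lt_irrefl 0 h2
  · have hr0 : 0 < r := mul_pos hc hFpos
    set w : Fin n → ℂ := fun i => d i - z with hw
    have hwnorm : ∀ i, r < ‖w i‖ := by
      intro i
      have h1 := hcon i
      rwa [dist_comm, Complex.dist_eq] at h1
    have hwne : ∀ i, w i ≠ 0 := by
      intro i h
      have h1 := hwnorm i
      rw [h, norm_zero] at h1
      linarith
    set A : Matrix (Fin n) (Fin n) ℂ := diagonal w with hA
    set B : Matrix (Fin n) (Fin n) ℂ := diagonal (fun i => (w i)⁻¹) with hB
    have hAB : A * B = 1 := by
      rw [hA, hB, diagonal_mul_diagonal]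
      have : (fun i => w i * (w i)⁻¹) = fun _ : Fin n => (1 : ℂ) := by
        funext i; exact mul_inv_cancel₀ (hwne i)
      rw [this, diagonal_one]
    have hdetA : IsUnit A.det := by
      rw [hA, det_diagonal, isUnit_iff_ne_zero]
      exact Finset.prod_ne_zero_iff.mpr fun i _ => hwne i
    set G : Matrix (Fin n) (Fin n) ℂ := V⁻¹ * F * V with hG
    haveI : Nonempty (Fin n) := ⟨⟨0, hn⟩⟩
    obtain ⟨i₀, -, hmin⟩ := Finset.exists_min_image Finset.univ (fun i => ‖w i‖)
      Finset.univ_nonempty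
    have hmin' : ∀ i, ‖w i₀‖ ≤ ‖w i‖ := fun i => hmin i (Finset.mem_univ i)
    have hw0pos : 0 < ‖w i₀‖ := lt_trans hr0 (hwnorm i₀)
    have hBnorm : specNorm B ≤ ‖w i₀‖⁻¹ := by
      apply specNorm_diagonal_le (by positivity)
      intro i
      rw [norm_inv]
      exact inv_anti₀ hw0pos (hmin' i)
    have hGnorm : specNorm G ≤ r := by
      calc specNorm (V⁻¹ * F * V) ≤ specNorm (V⁻¹ * F) * specNorm V := specNorm_mul_le _ _
        _ ≤ specNorm V⁻¹ * specNorm F * specNorm V := by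
            apply mul_le_mul_of_nonneg_right (specNorm_mul_le _ _) (specNorm_nonneg _)
        _ = r := by rw [hrdef, hcdef]; ring
    have hBG : specNorm (B * G) < 1 := by
      calc specNorm (B * G) ≤ specNorm B * specNorm G := specNorm_mul_le _ _
        _ ≤ ‖w i₀‖⁻¹ * r := by
            apply mul_le_mul hBnorm hGnorm (specNorm_nonneg _) (by positivity)
        _ < 1 := by
            rw [← div_eq_inv_mul]
            exact (div_lt_one hw0pos).mpr (hwnorm i₀)
    have hunit1 : IsUnit ((1 : Matrix (Fin n) (Fin n) ℂ) + B * G) := by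
      have h1 : ‖-(Matrix.toEuclideanCLM (𝕜 := ℂ) (B * G))‖ < 1 := by
        rw [norm_neg]; exact hBG
      have h2 : IsUnit (Matrix.toEuclideanCLM (𝕜 := ℂ) ((1 : Matrix (Fin n) (Fin n) ℂ) + B * G)) := by
        refine ⟨Units.oneSub _ h1, ?_⟩
        show (1 : _) - _ = _
        rw [sub_neg_eq_add, _root_.map_add, _root_.map_one]
      have h3 := h2.map (Matrix.toEuclideanCLM (𝕜 := ℂ)).symm
      simpa using h3
    have hsm : scalar (Fin n) z = (z • (1 : Matrix (Fin n) (Fin n) ℂ)) := by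
      rw [scalar_apply, Matrix.smul_eq_diagonal_mul, Matrix.mul_one]
    have hMid : V * diagonal d * V⁻¹ + F - scalar (Fin n) z = V * A * (1 + B * G) * V⁻¹ := by
      have hAAB : A * (1 + B * G) = A + G := by
        rw [Matrix.mul_add, Matrix.mul_one, ← Matrix.mul_assoc, hAB, Matrix.one_mul]
      have e1 : V * A * (1 + B * G) * V⁻¹ = V * (A + G) * V⁻¹ := by
        rw [Matrix.mul_assoc V A _, hAAB]
      rw [e1, Matrix.mul_add, Matrix.add_mul]
      have e2 : V * G * V⁻¹ = F := by
        rw [hG, ← Matrix.mul_assoc, ← Matrix.mul_assoc, Matrix.mul_nonsing_inv V hV,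
          Matrix.one_mul, Matrix.mul_assoc, Matrix.mul_nonsing_inv V hV, Matrix.mul_one]
      have hscal : V * scalar (Fin n) z * V⁻¹ = scalar (Fin n) z := by
        rw [hsm, mul_smul_comm z V 1, Matrix.mul_one, smul_mul_assoc, Matrix.mul_nonsing_inv V hV]
      have e3 : V * A * V⁻¹ = V * diagonal d * V⁻¹ - scalar (Fin n) z := by
        have hAd : A = diagonal d - scalar (Fin n) z := by
          rw [hA, scalar_apply]
          ext i j
          rcases eq_or_ne i j with rfl | hij
          · simp [hw]
          · simp [Matrix.diagonal_apply_ne _ hij]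
        rw [hAd, Matrix.mul_sub, Matrix.sub_mul, hscal]
      rw [e2, e3]
      abel
    have hVu : IsUnit V := (Matrix.isUnit_iff_isUnit_det V).mpr hV
    have hVinvu : IsUnit V⁻¹ :=
      (Matrix.isUnit_iff_isUnit_det _).mpr (Matrix.isUnit_nonsing_inv_det V hV)
    have hAu : IsUnit A := (Matrix.isUnit_iff_isUnit_det A).mpr hdetA
    have hunit : IsUnit (V * A * (1 + B * G) * V⁻¹) := ((hVu.mul hAu).mul hunit1).mul hVinvu
    rw [spectrum.mem_iff] at hz
    apply hz
    have heq : (algebraMap ℂ (Matrix (Fin n) (Fin n) ℂ)) z - (V * diagonal d * V⁻¹ + F)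
        = -(V * A * (1 + B * G) * V⁻¹) := by
      rw [← hMid]
      have halg : (algebraMap ℂ (Matrix (Fin n) (Fin n) ℂ)) z = scalar (Fin n) z := rfl
      rw [halg]
      abel
    rw [heq]
    exact hunit.neg


lemma list_eq_map {l : List ℂ} (h : l.length = n) :
    ∃ g : Fin n → ℂ, (l : Multiset ℂ) = Finset.univ.val.map g := by
  subst h
  refine ⟨l.get, ?_⟩
  rw [Fin.univ_def]
  show (l : Multiset ℂ) = Multiset.map l.get ↑(List.finRange l.length)
  rw [Multiset.map_coe]
  rw [← List.ofFn_eq_map, List.ofFn_get]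

lemma multiset_exists_fun {s : Multiset ℂ} (hn : Multiset.card s = n) :
    ∃ g : Fin n → ℂ, s = Finset.univ.val.map g := by
  have h : s.toList.length = n := by rw [Multiset.length_toList, hn]
  obtain ⟨g, hg⟩ := list_eq_map h
  exact ⟨g, by rw [← Multiset.coe_toList s, hg]⟩

lemma roots_card (A : Matrix (Fin n) (Fin n) ℂ) :
    Multiset.card A.charpoly.roots = n := by
  have h1 := Polynomial.splits_iff_card_roots.mp (IsAlgClosed.splits A.charpoly)
  rw [h1, Matrix.charpoly_natDegree_eq_dim]
  simp

lemma roots_exists_fun (A : Matrix (Fin n) (Fin n) ℂ) :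
    ∃ g : Fin n → ℂ, A.charpoly.roots = Finset.univ.val.map g :=
  multiset_exists_fun (roots_card A)

lemma charpoly_eq_of_roots {A : Matrix (Fin n) (Fin n) ℂ} {g : Fin n → ℂ}
    (h : A.charpoly.roots = Finset.univ.val.map g) :
    A.charpoly = ∏ i, (X - C (g i)) := by
  rw [prod_X_sub_C_eq, ← h]
  exact (IsAlgClosed.splits A.charpoly).eq_prod_roots_of_monic (Matrix.charpoly_monic A)

lemma eval_eq_prod_of_roots {A : Matrix (Fin n) (Fin n) ℂ} {g : Fin n → ℂ}
    (h : A.charpoly.roots = Finset.univ.val.map g) (z : ℂ) :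
    A.charpoly.eval z = ∏ i, (z - g i) := by
  rw [charpoly_eq_of_roots h]
  simp [Polynomial.eval_prod]


open Filter Topology

noncomputable def mcount (M E : Matrix (Fin n) (Fin n) ℂ) (d : Fin n → ℂ) (r : ℝ)
    (t : ℝ) (i : Fin n) : ℕ :=
  Multiset.card (Multiset.filter (fun z => dist z (d i) ≤ r) (M + t • E).charpoly.roots)

lemma key_subseq (M E : Matrix (Fin n) (Fin n) ℂ) (d : Fin n → ℂ) {r R : ℝ}
    (hr : 0 ≤ r) (hrR : r < R)
    (hsep : ∀ i j, i ≠ j → 2*R < dist (d i) (d j))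
    (hBF : ∀ s : ℝ, s ∈ Set.Icc (0:ℝ) 1 → ∀ z ∈ spectrum ℂ (M + s • E), ∃ i, dist z (d i) ≤ r)
    {t : ℝ} (ht : t ∈ Set.Icc (0:ℝ) 1) (u : ℕ → ℝ) (hu : ∀ k, u k ∈ Set.Icc (0:ℝ) 1)
    (hut : Filter.Tendsto u Filter.atTop (nhds t)) :
    ∃ φ : ℕ → ℕ, StrictMono φ ∧
      ∀ᶠ k in Filter.atTop, ∀ i, mcount M E d r (u (φ k)) i = mcount M E d r t i := by
  choose g hg using fun k => roots_exists_fun (M + u k • E)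
  set B : ℝ := r + ∑ i, ‖d i‖ with hB
  have hroot_mem : ∀ k j, g k j ∈ (M + u k • E).charpoly.roots := by
    intro k j
    rw [hg k]
    exact mem_univ_val_map.mpr ⟨j, rfl⟩
  have hgB : ∀ k, g k ∈ Set.univ.pi fun _ : Fin n => Metric.closedBall (0:ℂ) B := by
    intro k
    rw [Set.mem_univ_pi]
    intro j
    obtain ⟨i, hi⟩ := hBF (u k) (hu k) (g k j) (mem_spectrum_iff_root.mpr (hroot_mem k j))
    rw [Metric.mem_closedBall]
    calc dist (g k j) 0 ≤ dist (g k j) (d i) + dist (d i) 0 := dist_triangle _ _ _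
      _ ≤ r + ∑ i', ‖d i'‖ := by
          apply add_le_add hi
          rw [dist_zero_right]
          exact Finset.single_le_sum (fun i' _ => norm_nonneg (d i')) (Finset.mem_univ i)
  have hK : IsCompact (Set.univ.pi fun _ : Fin n => Metric.closedBall (0:ℂ) B) :=
    isCompact_univ_pi fun _ => isCompact_closedBall _ _
  obtain ⟨gl, -, φ, hφ, hconv⟩ := hK.tendsto_subseq hgB
  have hconv' : ∀ j, Tendsto (fun k => g (φ k) j) atTop (𝓝 (gl j)) :=
    fun j => (tendsto_pi_nhds.mp hconv) j
  have huφ : Tendsto (fun k => u (φ k)) atTop (𝓝 t) := hut.comp hφ.tendsto_atTop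
  have hdetcont : ∀ z : ℂ,
      Tendsto (fun k => (M + u (φ k) • E).charpoly.eval z) atTop
        (𝓝 ((M + t • E).charpoly.eval z)) := by
    intro z
    have hcont : Continuous fun s : ℝ => (scalar (Fin n) z - (M + s • E)).det :=
      Continuous.matrix_det (continuous_const.sub
        (continuous_const.add (continuous_id.smul continuous_const)))
    have := (hcont.tendsto t).comp huφ
    simpa only [eval_charpoly, Function.comp_def] using this
  have hlim : ∀ z : ℂ, (M + t • E).charpoly.eval z = ∏ j, (z - gl j) := by
    intro z
    have h1 : Tendsto (fun k => ∏ j, (z - g (φ k) j)) atTop (𝓝 (∏ j, (z - gl j))) := by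
      apply tendsto_finset_prod
      intro j _
      exact tendsto_const_nhds.sub (hconv' j)
    have h2 : (fun k => (M + u (φ k) • E).charpoly.eval z)
        = fun k => ∏ j, (z - g (φ k) j) := by
      funext k
      exact eval_eq_prod_of_roots (hg (φ k)) z
    have h3 := hdetcont z
    rw [h2] at h3
    exact tendsto_nhds_unique h3 h1
  have hrootst : (M + t • E).charpoly.roots = Finset.univ.val.map gl := by
    have hpoly : (M + t • E).charpoly = ∏ i, (X - C (gl i)) := by
      apply Polynomial.funext
      intro z
      rw [hlim z]
      simp [Polynomial.eval_prod]
    rw [hpoly, roots_prod_fun]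
  have hgl_disk : ∀ j, ∃ i, dist (gl j) (d i) ≤ r := by
    intro j
    apply hBF t ht (gl j)
    apply mem_spectrum_iff_root.mpr
    rw [hrootst]
    exact mem_univ_val_map.mpr ⟨j, rfl⟩
  choose idx hidx using hgl_disk
  have huniq : ∀ (x y : ℂ) (i i' : Fin n), dist x (d i) ≤ r → dist y (d i') ≤ r →
      dist x y < 2*(R - r) → i = i' := by
    intro x y i i' h1 h2 h3
    by_contra hne
    have h4 := hsep i i' hne
    have h5 : dist (d i) (d i') ≤ dist (d i) x + dist x y + dist y (d i') :=
      dist_triangle4 _ _ _ _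
    rw [dist_comm (d i) x] at h5
    linarith
  refine ⟨φ, hφ, ?_⟩
  have hev : ∀ᶠ k in atTop, ∀ j, dist (g (φ k) j) (gl j) < 2*(R - r) := by
    apply Filter.eventually_all.mpr
    intro j
    have := (Metric.tendsto_nhds.mp (hconv' j)) (2*(R - r)) (by linarith)
    exact this
  filter_upwards [hev] with k hk i
  unfold mcount
  rw [hg (φ k), hrootst, Multiset.filter_map, Multiset.filter_map,
    Multiset.card_map, Multiset.card_map]
  congr 1
  apply Multiset.filter_congr
  intro j _
  simp only [Function.comp]
  obtain ⟨i', hi'⟩ := hBF (u (φ k)) (hu (φ k)) (g (φ k) j)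
    (mem_spectrum_iff_root.mpr (hroot_mem (φ k) j))
  have hkj := hk j
  have hii' : i' = idx j := huniq _ _ _ _ hi' (hidx j) hkj
  constructor
  · intro h
    have : i = idx j := huniq _ _ _ _ h (hidx j) hkj
    rw [this]
    exact hidx j
  · intro h
    have h2 : i = idx j := huniq _ _ _ _ h (hidx j) (by rw [dist_self]; linarith)
    rw [h2, ← hii']
    exact hi'


lemma count_one (M E : Matrix (Fin n) (Fin n) ℂ) (d : Fin n → ℂ) {r R : ℝ}
    (hr : 0 ≤ r) (hrR : r < R)
    (hsep : ∀ i j, i ≠ j → 2*R < dist (d i) (d j))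
    (hBF : ∀ s : ℝ, s ∈ Set.Icc (0:ℝ) 1 → ∀ z ∈ spectrum ℂ (M + s • E), ∃ i, dist z (d i) ≤ r)
    (hM : M.charpoly = ∏ i, (X - C (d i))) :
    ∀ i, mcount M E d r 1 i = 1 := by
  have hm0 : ∀ i, mcount M E d r 0 i = 1 := by
    intro i
    unfold mcount
    rw [zero_smul, add_zero, hM, roots_prod_fun, Multiset.filter_map, Multiset.card_map]
    have hpred : ∀ j ∈ Finset.univ.val, ((fun z => dist z (d i) ≤ r) ∘ d) j ↔ j = i := by
      intro j _
      simp only [Function.comp]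
      constructor
      · intro h
        by_contra hne
        have h2 := hsep j i hne
        have : (0:ℝ) < R := lt_of_le_of_lt hr hrR
        linarith
      · rintro rfl
        rw [dist_self]
        exact hr
    rw [Multiset.filter_congr hpred, ← Finset.filter_val]
    rw [Finset.filter_eq' Finset.univ i]
    simp
  set X := Set.Icc (0:ℝ) 1 with hX
  set S : Set X := {x | ∀ i, mcount M E d r x.1 i = 1} with hS
  have hseq : ∀ (x : X) (v : ℕ → X), Tendsto v atTop (𝓝 x) →
      ∃ φ : ℕ → ℕ, StrictMono φ ∧
        ∀ᶠ k in atTop, ∀ i, mcount M E d r (v (φ k)).1 i = mcount M E d r x.1 i := by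
    intro x v hv
    exact key_subseq M E d hr hrR hsep hBF x.2 (fun k => (v k).1) (fun k => (v k).2)
      ((continuous_subtype_val.tendsto x).comp hv)
  have hSclosed : IsClosed S := by
    apply IsSeqClosed.isClosed
    intro v x hv hvx
    obtain ⟨φ, hφ, hev⟩ := hseq x v hvx
    obtain ⟨k, hk⟩ := hev.exists
    intro i
    rw [← hk i]
    exact hv (φ k) i
  have hSopen : IsOpen S := by
    rw [isOpen_iff_mem_nhds]
    intro x hx
    by_contra hnx
    have hex : ∀ k : ℕ, ∃ y : X, dist y x < 1/(k+1) ∧ y ∉ S := by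
      intro k
      by_contra hcon
      push_neg at hcon
      apply hnx
      apply Metric.mem_nhds_iff.mpr
      refine ⟨1/(k+1), by positivity, ?_⟩
      intro y hy
      exact hcon y (by rwa [Metric.mem_ball] at hy)
    choose v hv1 hv2 using hex
    have hvx : Tendsto v atTop (𝓝 x) := by
      rw [tendsto_iff_dist_tendsto_zero]
      apply squeeze_zero (fun k => dist_nonneg) (fun k => le_of_lt (hv1 k))
      exact tendsto_one_div_add_atTop_nhds_zero_nat
    obtain ⟨φ, hφ, hev⟩ := hseq x v hvx
    have hev2 : ∀ᶠ k in atTop, v (φ k) ∈ S := by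
      filter_upwards [hev] with k hk
      intro i
      rw [hk i]
      exact hx i
    obtain ⟨k, hk⟩ := hev2.exists
    exact hv2 (φ k) hk
  haveI : PreconnectedSpace X := Subtype.preconnectedSpace isPreconnected_Icc
  have h0mem : (⟨0, by constructor <;> norm_num⟩ : X) ∈ S := fun i => hm0 i
  have hSuniv : S = Set.univ := IsClopen.eq_univ ⟨hSclosed, hSopen⟩ ⟨_, h0mem⟩
  have h1mem : (⟨1, by constructor <;> norm_num⟩ : X) ∈ S := by
    rw [hSuniv]; trivial
  exact fun i => h1mem i


end Stmt6Aux

/-- Minimum eigenvalue gap of a matrix. -/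
noncomputable def gap {m : Type*} [Fintype m] [DecidableEq m] (M : Matrix m m ℂ) : ℝ :=
  sInf {d | ∃ lam ∈ spectrum ℂ M, ∃ mu ∈ spectrum ℂ M, lam ≠ mu ∧ d = dist lam mu}

/-- Eigenvector condition number: the infimum of `‖V‖‖V⁻¹‖` over diagonalizing `V`. -/
noncomputable def kappaV {m : Type*} [Fintype m] [DecidableEq m] (M : Matrix m m ℂ) : ℝ :=
  sInf {c | ∃ V : Matrix m m ℂ, ∃ d : m → ℂ,
    IsUnit V ∧ M = V * Matrix.diagonal d * V⁻¹ ∧ c = specNorm V * specNorm V⁻¹}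

namespace Stmt6Aux

lemma gap_bddBelow (A : Matrix (Fin n) (Fin n) ℂ) :
    BddBelow {d | ∃ lam ∈ spectrum ℂ A, ∃ mu ∈ spectrum ℂ A, lam ≠ mu ∧ d = dist lam mu} := by
  refine ⟨0, ?_⟩
  rintro b ⟨l, -, m, -, -, rfl⟩
  exact dist_nonneg

lemma gap_nonneg (A : Matrix (Fin n) (Fin n) ℂ) : 0 ≤ gap A := by
  unfold gap
  rcases Set.eq_empty_or_nonempty
    {d | ∃ lam ∈ spectrum ℂ A, ∃ mu ∈ spectrum ℂ A, lam ≠ mu ∧ d = dist lam mu} with h | h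
  · rw [h, Real.sInf_empty]
  · apply le_csInf h
    rintro b ⟨l, -, m, -, -, rfl⟩
    exact dist_nonneg

lemma kappa_nonneg (A : Matrix (Fin n) (Fin n) ℂ) : 0 ≤ kappaV A := by
  unfold kappaV
  rcases Set.eq_empty_or_nonempty
    {c | ∃ V : Matrix (Fin n) (Fin n) ℂ, ∃ d : Fin n → ℂ,
      IsUnit V ∧ A = V * Matrix.diagonal d * V⁻¹ ∧ c = specNorm V * specNorm V⁻¹} with h | h
  · rw [h, Real.sInf_empty]
  · apply le_csInf h
    rintro b ⟨V, d, -, -, rfl⟩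
    exact mul_nonneg (specNorm_nonneg V) (specNorm_nonneg V⁻¹)

lemma elem_ge_one (hn : 0 < n) {V : Matrix (Fin n) (Fin n) ℂ} (hV : IsUnit V) :
    1 ≤ specNorm V * specNorm V⁻¹ := by
  haveI : Nonempty (Fin n) := ⟨⟨0, hn⟩⟩
  have hVdet : IsUnit V.det := (Matrix.isUnit_iff_isUnit_det V).mp hV
  have h1 : specNorm (V * V⁻¹) ≤ specNorm V * specNorm V⁻¹ := specNorm_mul_le _ _
  rw [Matrix.mul_nonsing_inv V hVdet] at h1
  have h2 : specNorm (1 : Matrix (Fin n) (Fin n) ℂ) = 1 := by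
    unfold specNorm
    rw [_root_.map_one]
    exact norm_one
  linarith [h2 ▸ h1]

end Stmt6Aux

set_option maxHeartbeats 2000000 in
open Stmt6Aux Polynomial in
/-- If `M` has `n` distinct eigenvalues and `‖E‖ ≤ gap(M)/(8 n² κ_V(M)³)`, then
`gap(M + E) ≥ gap(M) - 2 κ_V(M) ‖E‖`. -/
theorem stmt6 {n : ℕ} (M E : Matrix (Fin n) (Fin n) ℂ)
    (hdist : (spectrum ℂ M).ncard = n)
    (hE : specNorm E ≤ gap M / (8 * (n : ℝ) ^ 2 * kappaV M ^ 3)) :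
    gap M - 2 * kappaV M * specNorm E ≤ gap (M + E) := by
  classical
  by_cases hE0 : specNorm E = 0
  · have hEeq : E = 0 := specNorm_eq_zero hE0
    rw [hE0, hEeq, add_zero, mul_zero, sub_zero]
  · have hEpos : 0 < specNorm E := lt_of_le_of_ne (specNorm_nonneg E) (Ne.symm hE0)
    have hgap0 : 0 ≤ gap M := gap_nonneg M
    have hk0 : 0 ≤ kappaV M := kappa_nonneg M
    have hpos : 0 < gap M / (8 * (n:ℝ)^2 * kappaV M^3) := lt_of_lt_of_le hEpos hE
    have hden : 0 < 8*(n:ℝ)^2*kappaV M^3 := by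
      by_contra h
      push_neg at h
      have h0 : 8*(n:ℝ)^2*kappaV M^3 = 0 := le_antisymm h (by positivity)
      rw [h0, div_zero] at hpos
      exact lt_irrefl 0 hpos
    have hgappos : 0 < gap M := by
      rcases div_pos_iff.mp hpos with ⟨h1, -⟩ | ⟨-, h2⟩
      · exact h1
      · linarith
    have hkpos : 0 < kappaV M := by
      rcases eq_or_lt_of_le hk0 with h | h
      · exfalso; rw [← h] at hden; norm_num at hden
      · exact h
    have hn1 : 0 < n := by
      by_contra h
      push_neg at h
      interval_cases n
      norm_num at hden
    have hn1' : (1:ℝ) ≤ (n:ℝ) := by exact_mod_cast hn1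
    have hKset : {c | ∃ V : Matrix (Fin n) (Fin n) ℂ, ∃ d : Fin n → ℂ,
        IsUnit V ∧ M = V * Matrix.diagonal d * V⁻¹
          ∧ c = specNorm V * specNorm V⁻¹}.Nonempty := by
      by_contra h
      rw [Set.not_nonempty_iff_eq_empty] at h
      have : kappaV M = 0 := by unfold kappaV; rw [h, Real.sInf_empty]
      linarith
    have hk1 : 1 ≤ kappaV M := by
      apply le_csInf hKset
      rintro b ⟨V, dv, hVu, -, rfl⟩
      exact elem_ge_one hn1 hVu
    apply le_of_forall_pos_le_add
    intro ε hε
    set κ := kappaV M with hκ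
    set δ := min (ε/(2*specNorm E)) (κ/8) with hδ
    have hδpos : 0 < δ := lt_min (by positivity) (by positivity)
    obtain ⟨c, hcmem, hclt⟩ := exists_lt_of_csInf_lt hKset (lt_add_of_pos_right (kappaV M) hδpos)
    obtain ⟨V, dvec, hVu, hMdecomp, hceq⟩ := hcmem
    have hck : κ ≤ c := by
      apply csInf_le
      · refine ⟨0, ?_⟩
        rintro b ⟨V', d', -, -, rfl⟩
        exact mul_nonneg (specNorm_nonneg _) (specNorm_nonneg _)
      · exact ⟨V, dvec, hVu, hMdecomp, hceq⟩
    have hc1 : 1 ≤ c := hceq ▸ elem_ge_one hn1 hVu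
    have hVdet : IsUnit V.det := (Matrix.isUnit_iff_isUnit_det V).mp hVu
    have hcharM : M.charpoly = ∏ i, (X - C (dvec i)) := by
      rw [hMdecomp]; exact charpoly_eq_prod hVdet dvec
    have hspecM : spectrum ℂ M = Set.range dvec := by
      ext z
      rw [mem_spectrum_iff_root, hcharM, roots_prod_fun, mem_univ_val_map]
      exact Iff.rfl
    have hdinj : Function.Injective dvec := by
      rw [hspecM] at hdist
      have hrange : Set.range dvec = ((Finset.univ.image dvec : Finset ℂ) : Set ℂ) := by
        ext x
        simp
      rw [hrange, Set.ncard_coe_finset] at hdist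
      have hcardeq : (Finset.univ.image dvec).card = (Finset.univ : Finset (Fin n)).card := by
        rw [hdist, Finset.card_univ, Fintype.card_fin]
      have hinj2 := Finset.injOn_of_card_image_eq hcardeq
      intro a b hab
      exact hinj2 (Finset.mem_coe.mpr (Finset.mem_univ a)) (Finset.mem_coe.mpr (Finset.mem_univ b)) hab
    have hgap_le : ∀ i j, i ≠ j → gap M ≤ dist (dvec i) (dvec j) := by
      intro i j hij
      apply csInf_le (gap_bddBelow M)
      exact ⟨dvec i, by rw [hspecM]; exact ⟨i, rfl⟩, dvec j, by rw [hspecM]; exact ⟨j, rfl⟩,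
        fun h => hij (hdinj h), rfl⟩
    set r := c * specNorm E with hrdef
    have hrpos : 0 < r := mul_pos (by linarith) hEpos
    have hrbound : r < gap M / 4 := by
      have hδ2 : δ ≤ κ/8 := min_le_right _ _
      have hclt' : c < κ + δ := by rw [hκ]; exact hclt
      have h1 : c ≤ (9/8)*κ := by linarith
      have ha : (1:ℝ) ≤ (n:ℝ)^2 := by nlinarith
      have hb : (1:ℝ) ≤ κ^2 := by nlinarith
      have h3 : (1:ℝ) ≤ (n:ℝ)^2*κ^2 := by nlinarith
      have h4 : r ≤ (9/8)*κ * (gap M/(8*(n:ℝ)^2*κ^3)) := by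
        rw [hrdef]
        apply mul_le_mul h1 hE (specNorm_nonneg E) (by positivity)
      have h5 : (9/8)*κ * (gap M/(8*(n:ℝ)^2*κ^3)) < gap M / 4 := by
        have key : (9/8)*κ * (gap M/(8*(n:ℝ)^2*κ^3)) = (9/64)*(gap M)/((n:ℝ)^2*κ^2) := by
          field_simp
          ring
        rw [key]
        have h6 : (9/64)*(gap M)/((n:ℝ)^2*κ^2) ≤ (9/64)*(gap M) :=
          div_le_self (by positivity) h3
        linarith
      linarith
    set R := gap M / 4 with hRdef
    have hrR : r < R := hrbound
    have hsepR : ∀ i j, i ≠ j → 2*R < dist (dvec i) (dvec j) := by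
      intro i j hij
      have := hgap_le i j hij
      rw [hRdef]
      linarith
    have hBF : ∀ s : ℝ, s ∈ Set.Icc (0:ℝ) 1 → ∀ z ∈ spectrum ℂ (M + s • E),
        ∃ i, dist z (dvec i) ≤ r := by
      intro s hs z hz
      rw [hMdecomp] at hz
      obtain ⟨i, hi⟩ := bauer_fike hVdet dvec (s • E)
        (by rw [← hceq]; linarith : 0 < specNorm V * specNorm V⁻¹) hz
      refine ⟨i, le_trans hi ?_⟩
      rw [← hceq, hrdef]
      have h1 : specNorm (s • E) ≤ s * specNorm E := specNorm_real_smul_le hs.1 E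
      have h2 : s * specNorm E ≤ specNorm E := by
        nlinarith [hs.2, hEpos, hs.1]
      nlinarith [hc1, specNorm_nonneg (s • E)]
    have hcount := count_one M E dvec (le_of_lt hrpos) hrR hsepR hBF hcharM
    have hex_root : ∀ i, ∃ z, z ∈ (M + E).charpoly.roots ∧ dist z (dvec i) ≤ r := by
      intro i
      have hc := hcount i
      unfold mcount at hc
      rw [one_smul] at hc
      have hne : (Multiset.filter (fun z => dist z (dvec i) ≤ r) (M + E).charpoly.roots) ≠ 0 := by
        intro h
        rw [h] at hc
        simp at hc
      obtain ⟨z, hz⟩ := Multiset.exists_mem_of_ne_zero hne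
      exact ⟨z, (Multiset.mem_filter.mp hz).1, (Multiset.mem_filter.mp hz).2⟩
    have hlow : gap M - 2*r ≤ gap (M + E) := by
      apply le_csInf
      · -- nonemptiness of the gap-set of M+E
        have hgapne : {d | ∃ lam ∈ spectrum ℂ M, ∃ mu ∈ spectrum ℂ M,
            lam ≠ mu ∧ d = dist lam mu}.Nonempty := by
          by_contra h
          rw [Set.not_nonempty_iff_eq_empty] at h
          have : gap M = 0 := by unfold gap; rw [h, Real.sInf_empty]
          linarith
        obtain ⟨b, lam0, hl0, mu0, hm0', hne0, -⟩ := hgapne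
        rw [hspecM] at hl0 hm0'
        obtain ⟨i0, hi0⟩ := hl0
        obtain ⟨j0, hj0⟩ := hm0'
        have hij0 : i0 ≠ j0 := by
          intro h
          apply hne0
          rw [← hi0, ← hj0, h]
        obtain ⟨z0, hz0r, hz0d⟩ := hex_root i0
        obtain ⟨z1, hz1r, hz1d⟩ := hex_root j0
        have hzne : z0 ≠ z1 := by
          intro h
          have hd := hgap_le i0 j0 hij0
          have h4 := dist_triangle (dvec i0) z0 (dvec j0)
          have e1 : dist (dvec i0) z0 = dist z0 (dvec i0) := dist_comm _ _
          have e2 : dist z0 (dvec j0) = dist z1 (dvec j0) := by rw [h]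
          have h5 : dist (dvec i0) (dvec j0) ≤ 2*r := by linarith [hz0d, hz1d]
          linarith [hrbound]
        exact ⟨dist z0 z1, z0, mem_spectrum_iff_root.mpr hz0r, z1,
          mem_spectrum_iff_root.mpr hz1r, hzne, rfl⟩
      · rintro b ⟨lam, hlam, mu, hmu, hlmne, rfl⟩
        have hlam' : lam ∈ (M + E).charpoly.roots := mem_spectrum_iff_root.mp hlam
        have hmu' : mu ∈ (M + E).charpoly.roots := mem_spectrum_iff_root.mp hmu
        have hlam1 : lam ∈ spectrum ℂ (M + (1:ℝ) • E) := by rwa [one_smul]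
        have hmu1 : mu ∈ spectrum ℂ (M + (1:ℝ) • E) := by rwa [one_smul]
        obtain ⟨i, hi⟩ := hBF 1 (by norm_num) lam hlam1
        obtain ⟨j, hj⟩ := hBF 1 (by norm_num) mu hmu1
        have hij : i ≠ j := by
          rintro rfl
          have hcnt := hcount i
          unfold mcount at hcnt
          rw [one_smul] at hcnt
          have hlmem : lam ∈ Multiset.filter (fun z => dist z (dvec i) ≤ r)
              (M + E).charpoly.roots := Multiset.mem_filter.mpr ⟨hlam', hi⟩
          have hmmem : mu ∈ Multiset.filter (fun z => dist z (dvec i) ≤ r)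
              (M + E).charpoly.roots := Multiset.mem_filter.mpr ⟨hmu', hj⟩
          have h2 : 1 < (Multiset.filter (fun z => dist z (dvec i) ≤ r)
              (M + E).charpoly.roots).toFinset.card :=
            Finset.one_lt_card.mpr ⟨lam, Multiset.mem_toFinset.mpr hlmem, mu,
              Multiset.mem_toFinset.mpr hmmem, hlmne⟩
          have h3 := Multiset.toFinset_card_le (Multiset.filter (fun z => dist z (dvec i) ≤ r)
              (M + E).charpoly.roots)
          omega
        have hd := hgap_le i j hij
        have h4 := dist_triangle4 (dvec i) lam mu (dvec j)
        rw [dist_comm (dvec i) lam] at h4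
        have h5 := dist_comm mu (dvec j)
        linarith [hi, hj]
    have h2r : 2*r ≤ 2*κ*specNorm E + ε := by
      have hδ1 : δ ≤ ε/(2*specNorm E) := min_le_left _ _
      have hδE : δ * specNorm E ≤ ε/2 := by
        have := mul_le_mul_of_nonneg_right hδ1 (le_of_lt hEpos)
        rw [div_mul_eq_mul_div, mul_comm (2:ℝ) (specNorm E)] at this
        calc δ * specNorm E ≤ ε * specNorm E / (specNorm E * 2) := this
          _ = ε/2 := by field_simp
      have hclt' : c < κ + δ := by rw [hκ]; exact hclt
      have : r ≤ (κ + δ) * specNorm E := by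
        rw [hrdef]
        exact mul_le_mul_of_nonneg_right (le_of_lt hclt') (le_of_lt hEpos)
      nlinarith
    rw [hκ] at h2r
    linarith
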